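/- For every fixed r ∈ (0,1), the function k ↦ −1 − 2r + 2kr − r² − (1−r)^k/(1+r)^{k−2} is strictly increasing in the real variable k; consequently, if k₁ > k₂ ≥ 3 are integers, then the unique roots satisfy r(k₁) < r(k₂). -/

import Mathlib

open Real

private lemma key_rw (r : ℝ) (hr0 : 0 < r) (hr1 : r < 1) (k : ℝ) :
    (1 - r) ^ k / (1 + r) ^ (k - 2) = ((1 - r) / (1 + r)) ^ k * (1 + r) ^ 2 := by
  have h1 : (0:ℝ) < 1 + r := by linarith
  have h2 : (0:ℝ) ≤ 1 - r := by linarith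
  rw [Real.rpow_sub h1, Real.div_rpow h2 (le_of_lt h1),
    show (2:ℝ) = ((2:ℕ):ℝ) by norm_num, Real.rpow_natCast]
  have hk : (1 + r) ^ k ≠ 0 := ne_of_gt (Real.rpow_pos_of_pos h1 k)
  field_simp

private lemma part1 (r : ℝ) (hr0 : 0 < r) (hr1 : r < 1) :
    StrictMono (fun k : ℝ =>
      -1 - 2 * r + 2 * k * r - r ^ 2 - (1 - r) ^ k / (1 + r) ^ (k - 2)) := by
  intro a b hab
  simp only
  rw [key_rw r hr0 hr1 a, key_rw r hr0 hr1 b]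
  have hq0 : (0:ℝ) < (1 - r) / (1 + r) := div_pos (by linarith) (by linarith)
  have hq1 : (1 - r) / (1 + r) < 1 := by
    rw [div_lt_one (by linarith)]; linarith
  have hdec : ((1 - r) / (1 + r)) ^ b < ((1 - r) / (1 + r)) ^ a :=
    Real.rpow_lt_rpow_of_exponent_gt hq0 hq1 hab
  have hsq : (0:ℝ) < (1 + r) ^ 2 := by positivity
  have := mul_lt_mul_of_pos_right hdec hsq
  nlinarith [mul_lt_mul_of_pos_right hab (by linarith : (0:ℝ) < 2 * r)]

private lemma hasDerivB (n m : ℕ) (r : ℝ) (hr : -1 < r) :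
    HasDerivAt (fun x : ℝ => -1 - 2*x + 2*(n:ℝ)*x - x^2 - (1-x)^n/(1+x)^m)
      ((2*(n:ℝ) - 2 - 2*r) -
        (((n:ℝ) * (1-r)^(n-1) * (-1)) * (1+r)^m - (1-r)^n * ((m:ℝ) * (1+r)^(m-1) * 1)) / ((1+r)^m)^2) r := by
  have h1 : HasDerivAt (fun x : ℝ => (1-x)^n) ((n:ℝ) * (1-r)^(n-1) * (-1)) r := by
    simpa using ((hasDerivAt_id r).const_sub 1).fun_pow n
  have h2 : HasDerivAt (fun x : ℝ => (1+x)^m) ((m:ℝ) * (1+r)^(m-1) * 1) r := by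
    simpa using ((hasDerivAt_id r).const_add 1).fun_pow m
  have hv : (1+r)^m ≠ 0 := pow_ne_zero _ (by linarith)
  have hq := h1.div h2 hv
  have hp : HasDerivAt (fun x : ℝ => -1 - 2*x + 2*(n:ℝ)*x - x^2) (2*(n:ℝ) - 2 - 2*r) r := by
    have h := (((hasDerivAt_const r (-1:ℝ)).sub ((hasDerivAt_id r).const_mul 2)).add
      ((hasDerivAt_id r).const_mul (2*(n:ℝ)))).sub (hasDerivAt_pow 2 r)
    refine (h : HasDerivAt (fun x : ℝ => -1 - 2*x + 2*(n:ℝ)*x - x^2) _ r).congr_deriv ?_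
    push_cast; ring
  exact hp.sub hq

private lemma part2mono (n : ℕ) (hn : 3 ≤ n) :
    StrictMonoOn (fun x : ℝ => -1 - 2*x + 2*(n:ℝ)*x - x^2 - (1-x)^n/(1+x)^(n-2)) (Set.Icc 0 1) := by
  set m := n - 2 with hm
  apply strictMonoOn_of_deriv_pos (convex_Icc 0 1)
  · apply ContinuousOn.sub
    · fun_prop
    · apply ContinuousOn.div (by fun_prop) (by fun_prop)
      intro x hx
      exact pow_ne_zero _ (by have := hx.1; linarith)
  · intro x hx
    rw [interior_Icc] at hx
    obtain ⟨hx0, hx1⟩ := hx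
    rw [(hasDerivB n m x (by linarith)).deriv]
    have hn3 : (3:ℝ) ≤ (n:ℝ) := by exact_mod_cast hn
    have h1x : (0:ℝ) ≤ 1 - x := by linarith
    have h1x' : (0:ℝ) < 1 + x := by linarith
    have ha : 0 ≤ (n:ℝ) * (1-x)^(n-1) * (1+x)^m :=
      mul_nonneg (mul_nonneg (by positivity) (pow_nonneg h1x _)) (pow_nonneg (le_of_lt h1x') _)
    have hb : 0 ≤ (1-x)^n * ((m:ℝ) * (1+x)^(m-1) * 1) :=
      mul_nonneg (pow_nonneg h1x _) (by positivity)
    have hden : (0:ℝ) < ((1+x)^m)^2 := by positivity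
    have hQ : (((n:ℝ) * (1-x)^(n-1) * (-1)) * (1+x)^m - (1-x)^n * ((m:ℝ) * (1+x)^(m-1) * 1)) / ((1+x)^m)^2 ≤ 0 := by
      apply div_nonpos_of_nonpos_of_nonneg _ (le_of_lt hden)
      nlinarith
    linarith

theorem bracket_strict_mono_in_k (r : ℝ) (hr0 : 0 < r) (hr1 : r < 1) :
    (StrictMono (fun k : ℝ =>
      -1 - 2 * r + 2 * k * r - r ^ 2 - (1 - r) ^ k / (1 + r) ^ (k - 2))) ∧
    (∀ k₁ k₂ : ℕ, 3 ≤ k₂ → k₂ < k₁ → ∀ r₁ r₂ : ℝ,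
      0 < r₁ → r₁ < 1 → 0 < r₂ → r₂ < 1 →
      -1 - 2 * r₁ + 2 * k₁ * r₁ - r₁ ^ 2 - (1 - r₁) ^ k₁ / (1 + r₁) ^ (k₁ - 2) = 0 →
      -1 - 2 * r₂ + 2 * k₂ * r₂ - r₂ ^ 2 - (1 - r₂) ^ k₂ / (1 + r₂) ^ (k₂ - 2) = 0 →
      r₁ < r₂) := by
  refine ⟨part1 r hr0 hr1, ?_⟩
  intro k₁ k₂ hk₂ hkk r₁ r₂ h10 h11 h20 h21 he1 he2
  -- cast identity: nat-power expression equals rpow expression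
  have cast_eq : ∀ (n : ℕ), 3 ≤ n → ∀ x : ℝ, 0 < x → x < 1 →
      (1 - x) ^ ((n:ℝ)) / (1 + x) ^ ((n:ℝ) - 2) = (1 - x) ^ n / (1 + x) ^ (n - 2) := by
    intro n hn x hx0 hx1
    have h2n : 2 ≤ n := by omega
    have hcast : ((n - 2 : ℕ) : ℝ) = (n:ℝ) - 2 := by
      rw [Nat.cast_sub h2n]; norm_num
    rw [← hcast, Real.rpow_natCast, Real.rpow_natCast]
  have hk1 : 3 ≤ k₁ := by omega
  -- B(k₂, r₁) < B(k₁, r₁) = 0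
  have hlt := part1 r₁ h10 h11 (show (k₂:ℝ) < (k₁:ℝ) by exact_mod_cast hkk)
  simp only at hlt
  rw [cast_eq k₂ hk₂ r₁ h10 h11, cast_eq k₁ hk1 r₁ h10 h11] at hlt
  rw [he1] at hlt
  -- so B_nat(k₂, r₁) < 0 = B_nat(k₂, r₂); conclude via strict mono in r
  by_contra hcon
  push_neg at hcon
  have := (part2mono k₂ hk₂).le_iff_le (Set.mem_Icc.2 ⟨le_of_lt h20, le_of_lt h21⟩)
      (Set.mem_Icc.2 ⟨le_of_lt h10, le_of_lt h11⟩)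
  have hle : -1 - 2*r₂ + 2*(k₂:ℝ)*r₂ - r₂^2 - (1-r₂)^k₂/(1+r₂)^(k₂-2)
      ≤ -1 - 2*r₁ + 2*(k₂:ℝ)*r₁ - r₁^2 - (1-r₁)^k₂/(1+r₁)^(k₂-2) := this.2 hcon
  rw [he2] at hle
  linarith
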